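/- Let (S, 𝒮) and (Y, 𝒴) be measurable spaces with every singleton of Y measurable, let Ψ : S → Y be measurable, let ν be a σ-finite measure on Y, and let y ↦ μ_y and y ↦ τ_y be two assignments of measures on S such that y ↦ μ_y(B) and y ↦ τ_y(B) are measurable for every B ∈ 𝒮. Assume: (i) μ is a measure on S satisfying μ(B) = ∫_Y μ_y(B) dν(y) for every B ∈ 𝒮; (ii) for every y ∈ Y, μ_y(Ψ⁻¹({y})ᶜ) = 0 and τ_y(Ψ⁻¹({y})ᶜ) = 0 (each μ_y and τ_y is concentrated on the fiber over y); (iii) V ∈ 𝒴 and for every y ∈ V the measures μ_y and τ_y are mutually absolutely continuous. Define τ(B) := ∫_V τ_y(B) dν(y). Then for every measurable B ⊆ Ψ⁻¹(V), one has μ(B) = 0 if and only if τ(B) = 0; that is, τ is equivalent to the restriction of μ to Ψ⁻¹(V). -/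

import Mathlib

open MeasureTheory

/-- **Fiberwise equivalence of disintegrated measures.**
Let `Ψ : S → Y` be measurable (with all singletons of `Y` measurable), `ν` a σ-finite measure
on `Y`, and `y ↦ μ_y`, `y ↦ τ_y` measurable families of measures on `S` such that:
(i) `μ(B) = ∫_Y μ_y(B) dν(y)` for every measurable `B`; (ii) each `μ_y` and `τ_y` is
concentrated on the fiber `Ψ⁻¹({y})`; (iii) for every `y` in the measurable set `V`, `μ_y`
and `τ_y` are mutually absolutely continuous.  Defining `τ(B) := ∫_V τ_y(B) dν(y)`, one has
for every measurable `B ⊆ Ψ⁻¹(V)`: `μ(B) = 0 ↔ τ(B) = 0`; i.e. `τ` is equivalent to the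
restriction of `μ` to `Ψ⁻¹(V)`. -/
theorem stmt_16
    {S Y : Type*} [MeasurableSpace S] [MeasurableSpace Y]
    (hY : ∀ y : Y, MeasurableSet ({y} : Set Y))
    (Ψ : S → Y) (hΨ : Measurable Ψ)
    (ν : Measure Y) [SigmaFinite ν]
    (μy τy : Y → Measure S)
    (hμmeas : ∀ B : Set S, MeasurableSet B → Measurable fun y => μy y B)
    (hτmeas : ∀ B : Set S, MeasurableSet B → Measurable fun y => τy y B)
    (μ : Measure S)
    (hdis : ∀ B : Set S, MeasurableSet B → μ B = ∫⁻ y, μy y B ∂ν)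
    (hconc : ∀ y : Y, μy y ((Ψ ⁻¹' {y})ᶜ) = 0 ∧ τy y ((Ψ ⁻¹' {y})ᶜ) = 0)
    (V : Set Y) (hV : MeasurableSet V)
    (hequiv : ∀ y ∈ V, μy y ≪ τy y ∧ τy y ≪ μy y) :
    ∀ B : Set S, MeasurableSet B → B ⊆ Ψ ⁻¹' V →
      (μ B = 0 ↔ ∫⁻ y in V, τy y B ∂ν = 0) := by
  intro B hB hBV
  have hout : ∀ y ∉ V, μy y B = 0 := by
    intro y hy
    refine measure_mono_null (fun s hs => ?_) (hconc y).1
    intro h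
    exact hy (h ▸ hBV hs)
  have hμ : μ B = ∫⁻ y in V, μy y B ∂ν := by
    rw [hdis B hB, ← lintegral_add_compl _ hV]
    have : ∫⁻ y in Vᶜ, μy y B ∂ν = 0 := by
      rw [setLIntegral_congr_fun hV.compl
        (fun y hy => hout y hy)]
      simp
    rw [this, add_zero]
  rw [hμ, lintegral_eq_zero_iff ((hμmeas B hB)), lintegral_eq_zero_iff ((hτmeas B hB)),
    Filter.EventuallyEq, Filter.EventuallyEq, ae_restrict_iff' hV, ae_restrict_iff' hV]
  constructor <;> intro h <;> filter_upwards [h] with y hy hyV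
  · exact ((hequiv y hyV).2) (hy hyV)
  · exact ((hequiv y hyV).1) (hy hyV)
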